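/- There is an absolute constant C > 0 such that for every r ∈ (1/2,1) the following holds. Let K := ⌊1/(4(1−r))⌋, a_j := r·e^{2πij(1−r)} for −K ≤ j ≤ K, and ψ_m(x) := ∑_{j=−K}^{m} Ψ_{a_j}(x) for −K ≤ m ≤ K. Then for all integers m, m' with −K ≤ m < m' ≤ K and every y ∈ [−π, π]: 0 < (ψ_{m'} − ψ_m)'(y) ≤ C/( (1−r)·(1 + dist(k(y), [m, m'])) ), where k(y) := ⌊y/(2π(1−r))⌋ and dist(k(y), [m, m']) := max(0, m − k(y), k(y) − m'). -/

import Mathlib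

open Real Set

noncomputable section

/-- The phase `Ψ_w` of the Möbius factor taking `w` to `0`. -/
def mobiusPhase (w : ℂ) (x : ℝ) : ℝ :=
  if w = 0 then x
  else
    x - Complex.arg w +
      2 * Real.arcsin (‖w‖ * Real.sin (x - Complex.arg w) /
        Real.sqrt (1 + ‖w‖ ^ 2 -
          2 * ‖w‖ * Real.cos (x - Complex.arg w)))

/-- The (two-sided) sequence `a_j = r e^{2πij(1-r)}`, `j ∈ ℤ`. -/
def aZ (r : ℝ) (j : ℤ) : ℂ :=
  (r : ℂ) * Complex.exp (((2 * Real.pi * (j : ℝ) * (1 - r) : ℝ) : ℂ) * Complex.I)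

/-- `k(x) = ⌊x/(2π(1-r))⌋`. -/
def kIdx (r x : ℝ) : ℤ := ⌊x / (2 * Real.pi * (1 - r))⌋

lemma one_sub_cos_ge (u : ℝ) (hu : |u| ≤ 3 * Real.pi / 2) :
    u ^ 2 / 23 ≤ 1 - Real.cos u := by
  have hpi : Real.pi < 3.15 := Real.pi_lt_d2
  have hpi3 : 3 < Real.pi := Real.pi_gt_three
  rw [← Real.cos_abs u]
  have h2 : u ^ 2 = |u| ^ 2 := (sq_abs u).symm
  rw [h2]
  set v := |u| with hv
  have hv0 : 0 ≤ v := abs_nonneg u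
  rcases le_or_gt v (Real.pi / 2) with hcase | hcase
  · have hj : 2 / Real.pi * (v / 2) ≤ Real.sin (v / 2) :=
      Real.mul_le_sin (by linarith) (by linarith)
    have heq : 2 / Real.pi * (v / 2) = v / Real.pi := by
      field_simp
    rw [heq] at hj
    have hvpn : 0 ≤ v / Real.pi := by positivity
    have hsin2 : (v / Real.pi) ^ 2 ≤ Real.sin (v / 2) ^ 2 :=
      pow_le_pow_left₀ hvpn hj 2
    have hs : Real.sin (v / 2) ^ 2 + Real.cos (v / 2) ^ 2 = 1 :=
      Real.sin_sq_add_cos_sq _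
    have hc2 : Real.cos v = 2 * Real.cos (v / 2) ^ 2 - 1 := by
      have := Real.cos_two_mul (v / 2)
      rw [show 2 * (v / 2) = v by ring] at this
      exact this
    have hkey : 2 * (v / Real.pi) ^ 2 ≤ 1 - Real.cos v := by nlinarith
    have hdiv : (v / Real.pi) ^ 2 = v ^ 2 / Real.pi ^ 2 := by ring
    rw [hdiv] at hkey
    have hpisq : Real.pi ^ 2 ≤ 46 := by nlinarith
    have hppos : (0:ℝ) < Real.pi ^ 2 := by positivity
    have : v ^ 2 / 23 ≤ 2 * (v ^ 2 / Real.pi ^ 2) := by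
      rw [show 2 * (v ^ 2 / Real.pi ^ 2) = 2 * v ^ 2 / Real.pi ^ 2 by ring,
        div_le_div_iff₀ (by norm_num) hppos]
      nlinarith [sq_nonneg v]
    linarith
  · have hc : Real.cos v ≤ 0 :=
      Real.cos_nonpos_of_pi_div_two_le_of_le hcase.le (by linarith)
    nlinarith [sq_nonneg v]

lemma sum_inv_bound (N d : ℕ) :
    ∑ i ∈ Finset.range N, (1:ℝ) / (1 + ((d:ℝ) + i) ^ 2) ≤ 4 / ((d:ℝ) + 1) := by
  have key : ∀ N : ℕ, ∑ i ∈ Finset.range N, (1:ℝ) / (1 + ((d:ℝ) + i) ^ 2)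
      ≤ 4 / ((d:ℝ) + 1) - 4 / ((d:ℝ) + N + 1) := by
    intro N
    induction N with
    | zero => simp
    | succ n ih =>
      rw [Finset.sum_range_succ]
      have hstep : (1:ℝ) / (1 + ((d:ℝ) + n) ^ 2)
          ≤ 4 / ((d:ℝ) + n + 1) - 4 / ((d:ℝ) + (n + 1) + 1) := by
        have hx : (0:ℝ) ≤ (d:ℝ) + n := by positivity
        rw [div_sub_div _ _ (by positivity) (by positivity),
          div_le_div_iff₀ (by positivity) (by positivity)]
        push_cast
        nlinarith [sq_nonneg ((d:ℝ) + n), sq_nonneg ((d:ℝ) + n - 1)]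
      push_cast at *
      linarith
  have := key N
  have h2 : (0:ℝ) < (d:ℝ) + N + 1 := by positivity
  have h3 : (0:ℝ) ≤ 4 / ((d:ℝ) + N + 1) := by positivity
  linarith

/-- Re-index an integer `Icc` sum from the left endpoint. -/
lemma sum_Icc_int_left (f : ℤ → ℝ) (a b : ℤ) :
    ∑ j ∈ Finset.Icc a b, f j
      = ∑ i ∈ Finset.range (b + 1 - a).toNat, f (a + i) := by
  rcases le_or_gt a (b + 1) with h | h
  · have hemb : Finset.Icc a b =
        (Finset.range (b + 1 - a).toNat).map
          ⟨fun i : ℕ => a + i, fun i j hij => by simpa using hij⟩ := by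
      ext j
      simp only [Finset.mem_Icc, Finset.mem_map, Finset.mem_range,
        Function.Embedding.coeFn_mk]
      constructor
      · intro ⟨h1, h2⟩
        exact ⟨(j - a).toNat, by omega, by show a + ((j - a).toNat : ℤ) = j; omega⟩
      · rintro ⟨i, hi, rfl⟩
        show a ≤ a + (i : ℤ) ∧ a + (i : ℤ) ≤ b
        omega
    rw [hemb, Finset.sum_map]
    rfl
  · rw [Finset.Icc_eq_empty (by omega)]
    have : (b + 1 - a).toNat = 0 := by omega
    simp [this]

/-- Re-index an integer `Icc` sum from the right endpoint. -/
lemma sum_Icc_int_right (f : ℤ → ℝ) (a b : ℤ) :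
    ∑ j ∈ Finset.Icc a b, f j
      = ∑ i ∈ Finset.range (b + 1 - a).toNat, f (b - i) := by
  rcases le_or_gt a (b + 1) with h | h
  · have hemb : Finset.Icc a b =
        (Finset.range (b + 1 - a).toNat).map
          ⟨fun i : ℕ => b - i, fun i j hij => by simpa using hij⟩ := by
      ext j
      simp only [Finset.mem_Icc, Finset.mem_map, Finset.mem_range,
        Function.Embedding.coeFn_mk]
      constructor
      · intro ⟨h1, h2⟩
        exact ⟨(b - j).toNat, by omega, by show b - ((b - j).toNat : ℤ) = j; omega⟩
      · rintro ⟨i, hi, rfl⟩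
        show a ≤ b - (i : ℤ) ∧ b - (i : ℤ) ≤ b
        omega
    rw [hemb, Finset.sum_map]
    rfl
  · rw [Finset.Icc_eq_empty (by omega)]
    have : (b + 1 - a).toNat = 0 := by omega
    simp [this]

lemma sum_kernel_bound (s : ℝ) (m m' : ℤ) (hmm : m < m') :
    ∑ j ∈ Finset.Icc (m + 1) m', (1:ℝ) / (1 + (s - j) ^ 2)
      ≤ 8 / (1 + ((max 0 (max (m - ⌊s⌋) (⌊s⌋ - m')) : ℤ) : ℝ)) := by
  set k : ℤ := ⌊s⌋ with hk
  have hsk : (k:ℝ) ≤ s := Int.floor_le s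
  have hsk1 : s < (k:ℝ) + 1 := Int.lt_floor_add_one s
  have tail : ∀ (d : ℤ) (N : ℕ), 0 ≤ d →
      ∑ i ∈ Finset.range N, (1:ℝ) / (1 + ((d:ℝ) + i) ^ 2) ≤ 4 / (1 + (d:ℝ)) := by
    intro d N hd
    have h1 := sum_inv_bound N d.toNat
    have hcast : ((d.toNat : ℕ) : ℝ) = (d : ℝ) := by exact_mod_cast Int.toNat_of_nonneg hd
    rw [hcast] at h1
    rw [add_comm (1:ℝ)]
    exact h1
  have hterm : ∀ (j c : ℤ), 0 ≤ c → ((c:ℝ) ≤ s - j ∨ (c:ℝ) ≤ (j:ℝ) - s) →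
      (1:ℝ) / (1 + (s - j) ^ 2) ≤ 1 / (1 + ((c:ℤ):ℝ) ^ 2) := by
    intro j c hc hcs
    have hc' : (0:ℝ) ≤ (c:ℝ) := by exact_mod_cast hc
    apply one_div_le_one_div_of_le (by positivity)
    rcases hcs with h | h
    · nlinarith
    · nlinarith
  rcases lt_or_ge k m with hkm | hmk
  · -- k < m
    have hmax : (max 0 (max (m - k) (k - m'))) = m - k := by omega
    rw [hmax]
    calc ∑ j ∈ Finset.Icc (m + 1) m', (1:ℝ) / (1 + (s - j) ^ 2)
        ≤ ∑ j ∈ Finset.Icc (m + 1) m', (1:ℝ) / (1 + (((j - k - 1 : ℤ)):ℝ) ^ 2) := by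
          apply Finset.sum_le_sum
          intro j hj
          simp only [Finset.mem_Icc] at hj
          apply hterm j (j - k - 1) (by omega)
          right; push_cast; linarith
      _ = ∑ i ∈ Finset.range (m' + 1 - (m + 1)).toNat,
            (1:ℝ) / (1 + (((m - k : ℤ) : ℝ) + i) ^ 2) := by
          rw [sum_Icc_int_left (fun j => (1:ℝ) / (1 + (((j - k - 1 : ℤ)):ℝ) ^ 2))]
          apply Finset.sum_congr rfl
          intro i _
          push_cast; ring
      _ ≤ 4 / (1 + ((m - k : ℤ):ℝ)) := tail (m - k) _ (by omega)
      _ ≤ 8 / (1 + ((m - k : ℤ):ℝ)) := by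
          have : (0:ℝ) < 1 + ((m - k : ℤ):ℝ) := by
            have : (1:ℝ) ≤ ((m - k : ℤ):ℝ) := by exact_mod_cast (by omega : (1:ℤ) ≤ m - k)
            linarith
          gcongr
          norm_num
  rcases lt_or_ge m' k with hkm' | hm'k
  · -- k > m'
    have hmax : (max 0 (max (m - k) (k - m'))) = k - m' := by omega
    rw [hmax]
    calc ∑ j ∈ Finset.Icc (m + 1) m', (1:ℝ) / (1 + (s - j) ^ 2)
        ≤ ∑ j ∈ Finset.Icc (m + 1) m', (1:ℝ) / (1 + (((k - j : ℤ)):ℝ) ^ 2) := by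
          apply Finset.sum_le_sum
          intro j hj
          simp only [Finset.mem_Icc] at hj
          apply hterm j (k - j) (by omega)
          left; push_cast; linarith
      _ = ∑ i ∈ Finset.range (m' + 1 - (m + 1)).toNat,
            (1:ℝ) / (1 + (((k - m' : ℤ) : ℝ) + i) ^ 2) := by
          rw [sum_Icc_int_right (fun j => (1:ℝ) / (1 + (((k - j : ℤ)):ℝ) ^ 2))]
          apply Finset.sum_congr rfl
          intro i _
          push_cast; ring
      _ ≤ 4 / (1 + ((k - m' : ℤ):ℝ)) := tail (k - m') _ (by omega)
      _ ≤ 8 / (1 + ((k - m' : ℤ):ℝ)) := by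
          have : (0:ℝ) < 1 + ((k - m' : ℤ):ℝ) := by
            have : (1:ℝ) ≤ ((k - m' : ℤ):ℝ) := by exact_mod_cast (by omega : (1:ℤ) ≤ k - m')
            linarith
          gcongr
          norm_num
  · -- m ≤ k ≤ m'
    have hmax : (max 0 (max (m - k) (k - m'))) = 0 := by omega
    rw [hmax]
    have hsplit : Finset.Icc (m + 1) m' = Finset.Icc (m + 1) k ∪ Finset.Icc (k + 1) m' := by
      ext j; simp only [Finset.mem_Icc, Finset.mem_union]; omega
    have hdisj : Disjoint (Finset.Icc (m + 1) k) (Finset.Icc (k + 1) m') := by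
      simp only [Finset.disjoint_left, Finset.mem_Icc]
      intro j h1 h2; omega
    rw [hsplit, Finset.sum_union hdisj]
    have hS1 : ∑ j ∈ Finset.Icc (m + 1) k, (1:ℝ) / (1 + (s - j) ^ 2) ≤ 4 := by
      calc ∑ j ∈ Finset.Icc (m + 1) k, (1:ℝ) / (1 + (s - j) ^ 2)
          ≤ ∑ j ∈ Finset.Icc (m + 1) k, (1:ℝ) / (1 + (((k - j : ℤ)):ℝ) ^ 2) := by
            apply Finset.sum_le_sum
            intro j hj
            simp only [Finset.mem_Icc] at hj
            apply hterm j (k - j) (by omega)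
            left; push_cast; linarith
        _ = ∑ i ∈ Finset.range (k + 1 - (m + 1)).toNat,
              (1:ℝ) / (1 + (((0 : ℤ) : ℝ) + i) ^ 2) := by
            rw [sum_Icc_int_right (fun j => (1:ℝ) / (1 + (((k - j : ℤ)):ℝ) ^ 2))]
            apply Finset.sum_congr rfl
            intro i _
            push_cast; ring
        _ ≤ 4 / (1 + ((0 : ℤ):ℝ)) := tail 0 _ le_rfl
        _ = 4 := by norm_num
    have hS2 : ∑ j ∈ Finset.Icc (k + 1) m', (1:ℝ) / (1 + (s - j) ^ 2) ≤ 4 := by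
      calc ∑ j ∈ Finset.Icc (k + 1) m', (1:ℝ) / (1 + (s - j) ^ 2)
          ≤ ∑ j ∈ Finset.Icc (k + 1) m', (1:ℝ) / (1 + (((j - k - 1 : ℤ)):ℝ) ^ 2) := by
            apply Finset.sum_le_sum
            intro j hj
            simp only [Finset.mem_Icc] at hj
            apply hterm j (j - k - 1) (by omega)
            right; push_cast; linarith
        _ = ∑ i ∈ Finset.range (m' + 1 - (k + 1)).toNat,
              (1:ℝ) / (1 + (((0 : ℤ) : ℝ) + i) ^ 2) := by
            rw [sum_Icc_int_left (fun j => (1:ℝ) / (1 + (((j - k - 1 : ℤ)):ℝ) ^ 2))]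
            apply Finset.sum_congr rfl
            intro i _
            push_cast; ring
        _ ≤ 4 / (1 + ((0 : ℤ):ℝ)) := tail 0 _ le_rfl
        _ = 4 := by norm_num
    push_cast
    linarith

lemma hasDerivAt_phase_aux (r c : ℝ) (hr0 : 0 < r) (hr1 : r < 1) (y : ℝ) :
    HasDerivAt (fun x => x - c + 2 * Real.arcsin (r * Real.sin (x - c) /
      Real.sqrt (1 + r ^ 2 - 2 * r * Real.cos (x - c))))
      ((1 - r ^ 2) / (1 + r ^ 2 - 2 * r * Real.cos (y - c))) y := by
  set u := y - c with hu
  set D := 1 + r ^ 2 - 2 * r * Real.cos u with hD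
  have hcos1 : Real.cos u ≤ 1 := Real.cos_le_one u
  have hcosm : -1 ≤ Real.cos u := Real.neg_one_le_cos u
  have hDpos : 0 < D := by nlinarith [sq_nonneg (1 - r)]
  set sD := Real.sqrt D with hsD
  have hsDpos : 0 < sD := Real.sqrt_pos.mpr hDpos
  have hsDsq : sD ^ 2 = D := Real.sq_sqrt hDpos.le
  have hrc : r * Real.cos u < 1 := by nlinarith
  -- arcsin argument
  set g := r * Real.sin u / sD with hg
  have hsc : Real.sin u ^ 2 + Real.cos u ^ 2 = 1 := Real.sin_sq_add_cos_sq u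
  have h1mg : 1 - g ^ 2 = (1 - r * Real.cos u) ^ 2 / D := by
    have hgsq : g ^ 2 = (r * Real.sin u) ^ 2 / D := by
      rw [hg, div_pow, hsDsq]
    rw [hgsq]
    field_simp
    linear_combination (-(r ^ 2)) * hsc
  have hrc1 : 0 < 1 - r * Real.cos u := by nlinarith
  have h1mgpos : 0 < 1 - g ^ 2 := by
    rw [h1mg]; exact div_pos (pow_pos hrc1 2) hDpos
  have hgne1 : g ≠ 1 := by intro h; rw [h] at h1mgpos; norm_num at h1mgpos
  have hgnem1 : g ≠ -1 := by intro h; rw [h] at h1mgpos; norm_num at h1mgpos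
  -- building blocks
  have hx : HasDerivAt (fun x : ℝ => x - c) 1 y := (hasDerivAt_id y).sub_const c
  have hsin : HasDerivAt (fun x : ℝ => Real.sin (x - c)) (Real.cos u) y := by
    have := (Real.hasDerivAt_sin u).comp y hx
    simpa [Function.comp_def] using this
  have hcosd : HasDerivAt (fun x : ℝ => Real.cos (x - c)) (-Real.sin u) y := by
    have := (Real.hasDerivAt_cos u).comp y hx
    simpa [Function.comp_def] using this
  have hDd : HasDerivAt (fun x : ℝ => 1 + r ^ 2 - 2 * r * Real.cos (x - c))
      (2 * r * Real.sin u) y := by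
    have := ((hcosd.const_mul (2 * r)).const_sub (1 + r ^ 2))
    simpa using this.congr_deriv (by ring)
  have hDne : (1 + r ^ 2 - 2 * r * Real.cos (y - c)) ≠ 0 := by
    rw [← hu, ← hD]; exact hDpos.ne'
  have hsqrtd : HasDerivAt (fun x : ℝ => Real.sqrt (1 + r ^ 2 - 2 * r * Real.cos (x - c)))
      (2 * r * Real.sin u / (2 * sD)) y := by
    have := hDd.sqrt hDne
    simpa [← hu, ← hD, ← hsD] using this
  have hnum : HasDerivAt (fun x : ℝ => r * Real.sin (x - c)) (r * Real.cos u) y :=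
    hsin.const_mul r
  have hsqrtne : Real.sqrt (1 + r ^ 2 - 2 * r * Real.cos (y - c)) ≠ 0 := by
    rw [← hu, ← hD, ← hsD]; exact hsDpos.ne'
  have hgd : HasDerivAt (fun x : ℝ => r * Real.sin (x - c) /
      Real.sqrt (1 + r ^ 2 - 2 * r * Real.cos (x - c)))
      ((r * Real.cos u * sD - r * Real.sin u * (2 * r * Real.sin u / (2 * sD))) / sD ^ 2) y := by
    have := hnum.div hsqrtd hsqrtne
    simpa [← hu, ← hD, ← hsD, Pi.div_def] using this
  have hgval : r * Real.sin (y - c) / Real.sqrt (1 + r ^ 2 - 2 * r * Real.cos (y - c)) = g := by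
    rw [← hu, ← hD, ← hsD, hg]
  have harc : HasDerivAt Real.arcsin (1 / Real.sqrt (1 - g ^ 2))
      (r * Real.sin (y - c) / Real.sqrt (1 + r ^ 2 - 2 * r * Real.cos (y - c))) := by
    rw [hgval]; exact Real.hasDerivAt_arcsin hgnem1 hgne1
  have hcomp : HasDerivAt (fun x : ℝ => Real.arcsin (r * Real.sin (x - c) /
      Real.sqrt (1 + r ^ 2 - 2 * r * Real.cos (x - c))))
      (1 / Real.sqrt (1 - g ^ 2) *
        ((r * Real.cos u * sD - r * Real.sin u * (2 * r * Real.sin u / (2 * sD))) / sD ^ 2)) y := by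
    have := harc.comp y hgd
    simpa [Function.comp_def] using this
  have htot := hx.add (hcomp.const_mul 2)
  refine htot.congr_deriv ?_
  symm
  -- the sqrt of 1 - g^2
  have hsq1mg : Real.sqrt (1 - g ^ 2) = (1 - r * Real.cos u) / sD := by
    rw [h1mg]
    rw [show (1 - r * Real.cos u) ^ 2 / D = ((1 - r * Real.cos u) / sD) ^ 2 by
      rw [div_pow, hsDsq]]
    exact Real.sqrt_sq (by positivity)
  have h1 : (1 : ℝ) - r * Real.cos u ≠ 0 := hrc1.ne'
  rw [hsq1mg, ← hsDsq]
  field_simp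
  have hsD2 : sD ^ 2 = 1 + r ^ 2 - 2 * r * Real.cos (y - c) := hsDsq
  have hsc2 : Real.sin (y - c) ^ 2 + Real.cos (y - c) ^ 2 = 1 := Real.sin_sq_add_cos_sq _
  ring_nf
  linear_combination (2 * r ^ 2) * hsc
    - (1 + r * Real.cos u) * (hsDsq.trans hD)

lemma hasDerivAt_mobiusPhase_aZ (r : ℝ) (hr0 : 0 < r) (hr1 : r < 1) (j : ℤ) (y : ℝ) :
    HasDerivAt (mobiusPhase (aZ r j))
      ((1 - r ^ 2) / (1 + r ^ 2 - 2 * r * Real.cos (y - 2 * Real.pi * (j : ℝ) * (1 - r)))) y := by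
  set w := aZ r j with hw
  set θ : ℝ := 2 * Real.pi * (j : ℝ) * (1 - r) with hθ
  have hwne : w ≠ 0 := by
    rw [hw, aZ]
    exact mul_ne_zero (by exact_mod_cast hr0.ne') (Complex.exp_ne_zero _)
  have habs : ‖w‖ = r := by
    rw [hw, aZ, norm_mul, Complex.norm_exp]
    simp [abs_of_pos hr0]
  -- relate arg w and θ modulo 2π
  have hw2 : (r : ℂ) * Complex.exp ((Complex.arg w : ℂ) * Complex.I) = w := by
    have := Complex.norm_mul_exp_arg_mul_I w
    rw [habs] at this
    exact this
  have hexp : Complex.exp ((θ : ℂ) * Complex.I) = Complex.exp ((Complex.arg w : ℂ) * Complex.I) := by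
    have hrne : (r : ℂ) ≠ 0 := by exact_mod_cast hr0.ne'
    have : (r : ℂ) * Complex.exp ((θ : ℂ) * Complex.I) = (r : ℂ) * Complex.exp ((Complex.arg w : ℂ) * Complex.I) := by
      rw [hw2, hw, aZ, ← hθ]
    exact mul_left_cancel₀ hrne this
  obtain ⟨n, hn⟩ := Complex.exp_eq_exp_iff_exists_int.mp hexp
  have hnre : θ = Complex.arg w + n * (2 * Real.pi) := by
    have := congrArg Complex.im hn
    simpa using this
  have hper : ∀ x : ℝ, Real.cos (x - Complex.arg w) = Real.cos (x - θ) := by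
    intro x
    have : x - Complex.arg w = (x - θ) + n * (2 * Real.pi) := by rw [hnre]; ring
    rw [this, Real.cos_add_int_mul_two_pi]
  have hfun : mobiusPhase w = fun x => x - Complex.arg w +
      2 * Real.arcsin (r * Real.sin (x - Complex.arg w) /
        Real.sqrt (1 + r ^ 2 - 2 * r * Real.cos (x - Complex.arg w))) := by
    funext x
    rw [mobiusPhase, if_neg hwne, habs]
  rw [hfun]
  have h := hasDerivAt_phase_aux r (Complex.arg w) hr0 hr1 y
  rw [hper y] at h
  exact h

set_option maxHeartbeats 1000000 in
/-- Derivative bound for the phase differences `(ψ_{m'} - ψ_m)'`,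
where `(ψ_{m'} - ψ_m)(y) = ∑_{j=m+1}^{m'} Ψ_{a_j}(y)`. -/
theorem psi_difference_deriv_bound :
    ∃ C : ℝ, 0 < C ∧
      ∀ r : ℝ, 1 / 2 < r → r < 1 →
        ∀ m m' : ℤ, -⌊1 / (4 * (1 - r))⌋ ≤ m → m < m' → m' ≤ ⌊1 / (4 * (1 - r))⌋ →
          ∀ y ∈ Set.Icc (-Real.pi) Real.pi,
            0 < deriv (fun t => ∑ j ∈ Finset.Icc (m + 1) m', mobiusPhase (aZ r j) t) y ∧
              deriv (fun t => ∑ j ∈ Finset.Icc (m + 1) m', mobiusPhase (aZ r j) t) y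
                ≤ C / ((1 - r) *
                    (1 + ((max 0 (max (m - kIdx r y) (kIdx r y - m')) : ℤ) : ℝ))) := by
  refine ⟨368, by norm_num, ?_⟩
  intro r hr2 hr1 m m' hm hmm hm' y hy
  obtain ⟨hy1, hy2⟩ := hy
  have hr0 : (0:ℝ) < r := by linarith
  have hε : (0:ℝ) < 1 - r := by linarith
  have hpi : (0:ℝ) < Real.pi := Real.pi_pos
  have hpi3 : (3:ℝ) < Real.pi := Real.pi_gt_three
  set K : ℤ := ⌊1 / (4 * (1 - r))⌋ with hK
  have hKle : (K:ℝ) ≤ 1 / (4 * (1 - r)) := Int.floor_le _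
  -- the derivative of the sum
  have hder : HasDerivAt (fun t => ∑ j ∈ Finset.Icc (m + 1) m', mobiusPhase (aZ r j) t)
      (∑ j ∈ Finset.Icc (m + 1) m',
        (1 - r ^ 2) / (1 + r ^ 2 - 2 * r * Real.cos (y - 2 * Real.pi * (j : ℝ) * (1 - r)))) y :=
    HasDerivAt.fun_sum fun j _ => hasDerivAt_mobiusPhase_aZ r hr0 hr1 j y
  rw [hder.deriv]
  have hDpos : ∀ j : ℤ, (0:ℝ) < 1 + r ^ 2 - 2 * r * Real.cos (y - 2 * Real.pi * (j : ℝ) * (1 - r)) := by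
    intro j
    nlinarith [Real.cos_le_one (y - 2 * Real.pi * (j : ℝ) * (1 - r)), sq_nonneg (1 - r)]
  have hnum : (0:ℝ) < 1 - r ^ 2 := by nlinarith
  constructor
  · apply Finset.sum_pos
    · intro j _
      exact div_pos hnum (hDpos j)
    · exact Finset.nonempty_Icc.mpr (by omega)
  · -- the upper bound
    set s : ℝ := y / (2 * Real.pi * (1 - r)) with hs
    clear_value s
    have h2pe : (0:ℝ) < 2 * Real.pi * (1 - r) := by positivity
    have hkidx : kIdx r y = ⌊s⌋ := by rw [hs]; rfl
    set dI : ℤ := max 0 (max (m - kIdx r y) (kIdx r y - m')) with hdI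
    have hdInn : (0:ℤ) ≤ dI := le_max_left _ _
    have hdR : (0:ℝ) ≤ (dI:ℝ) := by exact_mod_cast hdInn
    have hterm : ∀ j ∈ Finset.Icc (m + 1) m',
        (1 - r ^ 2) / (1 + r ^ 2 - 2 * r * Real.cos (y - 2 * Real.pi * (j : ℝ) * (1 - r)))
          ≤ (46 / (1 - r)) * (1 / (1 + (s - j) ^ 2)) := by
      intro j hj
      simp only [Finset.mem_Icc] at hj
      have hjK : |(j:ℝ)| ≤ 1 / (4 * (1 - r)) := by
        have h1 : -K ≤ j := by omega
        have h2 : j ≤ K := by omega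
        have h1' : -(K:ℝ) ≤ (j:ℝ) := by exact_mod_cast h1
        have h2' : (j:ℝ) ≤ (K:ℝ) := by exact_mod_cast h2
        rw [abs_le]
        have hKnn : (0:ℤ) ≤ K := by
          rw [hK]
          apply Int.floor_nonneg.mpr
          positivity
        constructor <;> nlinarith
      set u : ℝ := y - 2 * Real.pi * (j : ℝ) * (1 - r) with hu
      clear_value u
      have huabs : |u| ≤ 3 * Real.pi / 2 := by
        have habs2 : |2 * Real.pi * (j:ℝ) * (1 - r)| ≤ Real.pi / 2 := by
          rw [show 2 * Real.pi * (j:ℝ) * (1 - r) = (2 * Real.pi * (1 - r)) * (j:ℝ) by ring,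
            abs_mul, abs_of_pos h2pe]
          calc (2 * Real.pi * (1 - r)) * |(j:ℝ)|
              ≤ (2 * Real.pi * (1 - r)) * (1 / (4 * (1 - r))) :=
                mul_le_mul_of_nonneg_left hjK h2pe.le
            _ = Real.pi / 2 := by field_simp; ring
        have hy' : |y| ≤ Real.pi := abs_le.mpr ⟨hy1, hy2⟩
        rw [abs_le] at habs2 hy' ⊢
        rw [hu]
        constructor <;> [linarith [habs2.1, habs2.2, hy'.1]; linarith [habs2.1, hy'.2]]
      have hcos : u ^ 2 / 23 ≤ 1 - Real.cos u := one_sub_cos_ge u huabs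
      have hueq : u = 2 * Real.pi * (1 - r) * (s - j) := by
        rw [hu, hs]
        field_simp
      have husq : (1 - r) ^ 2 * (s - j) ^ 2 ≤ u ^ 2 := by
        rw [hueq]
        have : (2 * Real.pi * (1 - r) * (s - j)) ^ 2
            = (2 * Real.pi) ^ 2 * ((1 - r) ^ 2 * (s - j) ^ 2) := by ring
        rw [this]
        have hpisq : (1:ℝ) ≤ (2 * Real.pi) ^ 2 := by nlinarith
        nlinarith [hpisq, mul_nonneg (sq_nonneg (1 - r)) (sq_nonneg (s - (j:ℝ)))]
      have hDlow : (1 - r) ^ 2 * (1 + (s - j) ^ 2) / 23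
          ≤ 1 + r ^ 2 - 2 * r * Real.cos u := by
        have h2r : (1:ℝ) ≤ 2 * r := by linarith
        have hZ : (0:ℝ) ≤ 1 - Real.cos u := by linarith [Real.cos_le_one u]
        have hprod : (0:ℝ) ≤ (2 * r - 1) * (1 - Real.cos u) :=
          mul_nonneg (by linarith) hZ
        nlinarith [hcos, husq, hprod, sq_nonneg (1 - r)]
      have hdpos : (0:ℝ) < (1 - r) ^ 2 * (1 + (s - j) ^ 2) / 23 := by positivity
      calc (1 - r ^ 2) / (1 + r ^ 2 - 2 * r * Real.cos u)
          ≤ (2 * (1 - r)) / ((1 - r) ^ 2 * (1 + (s - j) ^ 2) / 23) := by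
            apply div_le_div₀ (by positivity) (by nlinarith) hdpos hDlow
        _ = (46 / (1 - r)) * (1 / (1 + (s - j) ^ 2)) := by
            have hA : (0:ℝ) < 1 + (s - (j:ℝ)) ^ 2 := by positivity
            field_simp
            ring
    calc ∑ j ∈ Finset.Icc (m + 1) m',
          (1 - r ^ 2) / (1 + r ^ 2 - 2 * r * Real.cos (y - 2 * Real.pi * (j : ℝ) * (1 - r)))
        ≤ ∑ j ∈ Finset.Icc (m + 1) m', (46 / (1 - r)) * (1 / (1 + (s - j) ^ 2)) :=
          Finset.sum_le_sum hterm
      _ = (46 / (1 - r)) * ∑ j ∈ Finset.Icc (m + 1) m', (1:ℝ) / (1 + (s - j) ^ 2) := by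
          rw [Finset.mul_sum]
      _ ≤ (46 / (1 - r)) * (8 / (1 + (dI:ℝ))) := by
          apply mul_le_mul_of_nonneg_left _ (by positivity)
          rw [hdI, hkidx]
          exact sum_kernel_bound s m m' hmm
      _ = 368 / ((1 - r) * (1 + (dI:ℝ))) := by
          rw [div_mul_div_comm]
          norm_num
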